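/- Let β > 0, let m ≥ 1 be an integer, let μ be a Borel probability measure on the cube [0,1]^m (a utility vector u = (u_1, …, u_m)), and let B ∈ {1, …, m}. Then ∑_{j=1}^m ( ∫ exp(β·u_j)/(∑_{k=1}^m exp(β·u_k)) dμ ) · ( ∫ u_j dμ ) ≥ (1/(m·exp(β))) · ∫ u_B dμ. -/

import Mathlib

open MeasureTheory

theorem random_dictator_upper_bound (β : ℝ) (hβ : 0 < β) (m : ℕ) (hm : 1 ≤ m)
    (μ : Measure (Fin m → ℝ)) [IsProbabilityMeasure μ]
    (hsupp : ∀ᵐ u ∂μ, ∀ j, u j ∈ Set.Icc (0:ℝ) 1)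
    (B : Fin m) :
    ∑ j, (∫ u, Real.exp (β * u j) / (∑ k, Real.exp (β * u k)) ∂μ) * (∫ u, u j ∂μ)
      ≥ (1 / ((m : ℝ) * Real.exp β)) * (∫ u, u B ∂μ) := by
  haveI : NeZero m := ⟨by omega⟩
  set f : Fin m → (Fin m → ℝ) → ℝ :=
    fun j u => Real.exp (β * u j) / (∑ k, Real.exp (β * u k)) with hf
  have hden_pos : ∀ u : Fin m → ℝ, 0 < ∑ k, Real.exp (β * u k) := fun u =>
    Finset.sum_pos (fun k _ => Real.exp_pos _) ⟨⟨0, by omega⟩, Finset.mem_univ _⟩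
  have hf_nonneg : ∀ j u, 0 ≤ f j u := fun j u =>
    div_nonneg (Real.exp_pos _).le (hden_pos u).le
  have hf_le_one : ∀ j u, f j u ≤ 1 := by
    intro j u
    rw [div_le_one (hden_pos u)]
    exact Finset.single_le_sum (f := fun k => Real.exp (β * u k)) (fun k _ => (Real.exp_pos _).le) (Finset.mem_univ j)
  have hf_meas : ∀ j, Measurable (f j) := by
    intro j
    exact (by fun_prop : Measurable fun u : Fin m → ℝ => Real.exp (β * u j)).div
      (Finset.measurable_sum _ fun k _ => by fun_prop)
  have hf_int : ∀ j, Integrable (f j) μ := by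
    intro j
    refine (integrable_const (1:ℝ)).mono' ((hf_meas j).aestronglyMeasurable) ?_
    filter_upwards with u
    rw [Real.norm_eq_abs, abs_of_nonneg (hf_nonneg j u)]
    exact hf_le_one j u
  have hu_int : ∀ j : Fin m, Integrable (fun u : Fin m → ℝ => u j) μ := by
    intro j
    refine (integrable_const (1:ℝ)).mono' (measurable_pi_apply j).aestronglyMeasurable ?_
    filter_upwards [hsupp] with u hu
    rw [Real.norm_eq_abs, abs_of_nonneg (hu j).1]
    exact (hu j).2
  have hw_nonneg : ∀ j : Fin m, 0 ≤ ∫ u, u j ∂μ := fun j =>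
    integral_nonneg_of_ae (by filter_upwards [hsupp] with u hu; exact (hu j).1)
  have hp_nonneg : ∀ j : Fin m, 0 ≤ ∫ u, f j u ∂μ := fun j =>
    integral_nonneg (fun u => hf_nonneg j u)
  have hc_pos : (0:ℝ) < (m : ℝ) * Real.exp β := by positivity
  have hpB : 1 / ((m : ℝ) * Real.exp β) ≤ ∫ u, f B u ∂μ := by
    have := integral_mono_ae (integrable_const (1 / ((m : ℝ) * Real.exp β))) (hf_int B) ?_
    · simpa using this
    · filter_upwards [hsupp] with u hu
      have h1 : (1:ℝ) ≤ Real.exp (β * u B) := by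
        rw [← Real.exp_zero]
        exact Real.exp_le_exp.mpr (by nlinarith [(hu B).1])
      have h2 : (∑ k, Real.exp (β * u k)) ≤ (m : ℝ) * Real.exp β := by
        calc (∑ k, Real.exp (β * u k)) ≤ ∑ _k : Fin m, Real.exp β := by
              refine Finset.sum_le_sum fun k _ => Real.exp_le_exp.mpr ?_
              nlinarith [(hu k).2]
          _ = (m : ℝ) * Real.exp β := by simp [Finset.sum_const, mul_comm]
      exact div_le_div₀ (Real.exp_pos _).le h1 (hden_pos u) h2
  calc ∑ j, (∫ u, f j u ∂μ) * (∫ u, u j ∂μ)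
      ≥ (∫ u, f B u ∂μ) * (∫ u, u B ∂μ) :=
        Finset.single_le_sum (f := fun j => (∫ u, f j u ∂μ) * (∫ u, u j ∂μ))
          (fun j _ => mul_nonneg (hp_nonneg j) (hw_nonneg j)) (Finset.mem_univ B)
    _ ≥ (1 / ((m : ℝ) * Real.exp β)) * (∫ u, u B ∂μ) :=
        mul_le_mul_of_nonneg_right hpB (hw_nonneg B)
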